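/- arXiv:1705.06359 — 2 statements merged into one kernel-verified Lean document; each statement's English description precedes it below -/
import Mathlib

section
/- For every integer p ≥ 1 and k ∈ {1,2,3}, the number of lattice points of ℤ² on the boundary ∂(ℓ_p·Q̊_p^[k]) equals: for k = 1, (p+3)²/2 if p is odd and (p+3)² if p is even; for k = 2, (p²+5p+8)/2 if p is odd and p²+5p+8 if p is even; for k = 3, (p²+4p+7)/2 if p is odd and p²+4p+7 if p is even. -/
open Pointwise

/-- Q_p^[1] := conv({(1,−1),(p,1),(−1,0)}). -/
def Qpoly1 (p : ℤ) : Set (ℝ × ℝ) :=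
  convexHull ℝ ({(1, -1), ((p : ℝ), 1), (-1, 0)} : Set (ℝ × ℝ))

/-- Q_p^[2] := conv({(1,−1),(p,1),(p−1,1),(−1,0)}). -/
def Qpoly2 (p : ℤ) : Set (ℝ × ℝ) :=
  convexHull ℝ ({(1, -1), ((p : ℝ), 1), ((p : ℝ) - 1, 1), (-1, 0)} : Set (ℝ × ℝ))

/-- Q_p^[3] := conv({(1,−1),(p,1),(p−1,1),(−1,0),(0,−1)}). -/
def Qpoly3 (p : ℤ) : Set (ℝ × ℝ) :=
  convexHull ℝ ({(1, -1), ((p : ℝ), 1), ((p : ℝ) - 1, 1), (-1, 0), (0, -1)} : Set (ℝ × ℝ))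

/-- Q_p^[k] for k ∈ {1,2,3}. -/
def Qpoly (p : ℤ) (k : ℕ) : Set (ℝ × ℝ) :=
  if k = 1 then Qpoly1 p else if k = 2 then Qpoly2 p else Qpoly3 p

/-- The lattice ℤ² viewed inside ℝ². -/
def latticePts : Set (ℝ × ℝ) := {x | ∃ m n : ℤ, x = ((m : ℝ), (n : ℝ))}

/-- The polar polygon Q̊ := {y : ⟨y,x⟩ ≥ −1 for all x ∈ Q}. -/
def polar2 (Q : Set (ℝ × ℝ)) : Set (ℝ × ℝ) :=
  {y | ∀ x ∈ Q, -1 ≤ y.1 * x.1 + y.2 * x.2}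

/-- ℓ_p := (p+1)/2 if p is odd, p+1 if p is even. -/
def ellp (p : ℤ) : ℤ := if Odd p then (p + 1) / 2 else p + 1

section Aux

lemma interior_halfplane (a b r : ℝ) (hab : a ≠ 0 ∨ b ≠ 0) :
    interior {y : ℝ × ℝ | r ≤ a * y.1 + b * y.2} = {y : ℝ × ℝ | r < a * y.1 + b * y.2} := by
  have hM : 0 < max |a| |b| := by
    rcases hab with h | h
    · exact lt_max_of_lt_left (abs_pos.2 h)
    · exact lt_max_of_lt_right (abs_pos.2 h)
  apply le_antisymm
  · intro x hx
    have hmem : x ∈ {y : ℝ × ℝ | r ≤ a * y.1 + b * y.2} := interior_subset hx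
    simp only [Set.mem_setOf_eq] at hmem ⊢
    rcases lt_or_eq_of_le hmem with h | h
    · exact h
    exfalso
    rw [mem_interior_iff_mem_nhds, Metric.mem_nhds_iff] at hx
    obtain ⟨ε, hε, hball⟩ := hx
    set δ : ℝ := ε / (2 * max |a| |b|) with hδdef
    have hδ : 0 < δ := by positivity
    have hz : (x.1 - δ * a, x.2 - δ * b) ∈ Metric.ball x ε := by
      rw [Metric.mem_ball, Prod.dist_eq]
      have h1 : dist (x.1 - δ * a) x.1 ≤ δ * max |a| |b| := by
        rw [Real.dist_eq]
        have : |x.1 - δ * a - x.1| = δ * |a| := by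
          rw [show x.1 - δ * a - x.1 = -(δ * a) by ring, abs_neg, abs_mul, abs_of_pos hδ]
        rw [this]
        exact mul_le_mul_of_nonneg_left (le_max_left _ _) hδ.le
      have h2 : dist (x.2 - δ * b) x.2 ≤ δ * max |a| |b| := by
        rw [Real.dist_eq]
        have : |x.2 - δ * b - x.2| = δ * |b| := by
          rw [show x.2 - δ * b - x.2 = -(δ * b) by ring, abs_neg, abs_mul, abs_of_pos hδ]
        rw [this]
        exact mul_le_mul_of_nonneg_left (le_max_right _ _) hδ.le
      have hhalf : δ * max |a| |b| = ε / 2 := by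
        rw [hδdef]; field_simp
      calc max (dist (x.1 - δ * a) x.1) (dist (x.2 - δ * b) x.2) ≤ δ * max |a| |b| :=
            max_le h1 h2
        _ = ε / 2 := hhalf
        _ < ε := by linarith
    have hzz := hball hz
    simp only [Set.mem_setOf_eq] at hzz
    have hab2 : 0 < a ^ 2 + b ^ 2 := by
      rcases hab with h | h <;> positivity
    nlinarith [hzz, h]
  · apply interior_maximal
    · exact Set.setOf_subset_setOf.2 fun x hx => le_of_lt hx
    · have : {y : ℝ × ℝ | r < a * y.1 + b * y.2} =
          (fun y : ℝ × ℝ => a * y.1 + b * y.2) ⁻¹' (Set.Ioi r) := rfl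
      rw [this]
      exact (isOpen_Ioi).preimage (by fun_prop)

lemma frontierN {n : ℕ} (a b r : Fin n → ℝ) (hab : ∀ i, a i ≠ 0 ∨ b i ≠ 0) :
    frontier {y : ℝ × ℝ | ∀ i, r i ≤ a i * y.1 + b i * y.2} =
      {y : ℝ × ℝ | (∀ i, r i ≤ a i * y.1 + b i * y.2) ∧
        ∃ i, r i = a i * y.1 + b i * y.2} := by
  have hS : {y : ℝ × ℝ | ∀ i, r i ≤ a i * y.1 + b i * y.2} =
      ⋂ i, {y : ℝ × ℝ | r i ≤ a i * y.1 + b i * y.2} := by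
    ext y; simp
  have hclosed : IsClosed {y : ℝ × ℝ | ∀ i, r i ≤ a i * y.1 + b i * y.2} := by
    rw [hS]
    exact isClosed_iInter fun i => isClosed_le continuous_const (by fun_prop)
  rw [hclosed.frontier_eq, hS, interior_iInter_of_finite]
  ext y
  simp only [Set.mem_diff, Set.mem_iInter, Set.mem_setOf_eq, interior_halfplane _ _ _ (hab _),
    not_forall]
  constructor
  · rintro ⟨h1, i, h2⟩
    exact ⟨h1, i, le_antisymm (h1 i) (not_lt.1 h2)⟩
  · rintro ⟨h1, i, h2⟩
    exact ⟨h1, i, by rw [← h2]; exact lt_irrefl _⟩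

lemma polar2_convexHull (S : Set (ℝ × ℝ)) :
    polar2 (convexHull ℝ S) = {y | ∀ x ∈ S, -1 ≤ y.1 * x.1 + y.2 * x.2} := by
  ext y
  constructor
  · intro h x hx
    exact h x (subset_convexHull ℝ S hx)
  · intro h x hx
    have hlin : IsLinearMap ℝ (fun x : ℝ × ℝ => y.1 * x.1 + y.2 * x.2) :=
      ⟨fun a b => by simp only [Prod.fst_add, Prod.snd_add]; ring,
       fun c a => by simp only [Prod.smul_fst, Prod.smul_snd, smul_eq_mul]; ring⟩
    exact convexHull_min h (convex_halfSpace_ge hlin (-1)) hx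

lemma inv_smul_ineq {L : ℝ} (hL : 0 < L) (t : ℝ) : -1 ≤ L⁻¹ * t ↔ -L ≤ t := by
  rw [inv_mul_eq_div, le_div_iff₀ hL, neg_one_mul]

end Aux

lemma frontier1 (p : ℤ) (L : ℝ) (hL : 0 < L) :
    frontier (L • polar2 (Qpoly1 p)) =
      {y : ℝ × ℝ | (-L ≤ y.1 - y.2 ∧ -L ≤ p * y.1 + y.2 ∧ y.1 ≤ L) ∧
        (y.1 - y.2 = -L ∨ p * y.1 + y.2 = -L ∨ y.1 = L)} := by
  have hsm : L • polar2 (Qpoly1 p) =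
      {y : ℝ × ℝ | ∀ i : Fin 3,
        (fun _ => -L) i ≤ ![1, (p : ℝ), -1] i * y.1 + ![(-1 : ℝ), 1, 0] i * y.2} := by
    ext y
    have key : ∀ x1 x2 : ℝ, (-1 ≤ L⁻¹ * y.1 * x1 + L⁻¹ * y.2 * x2) ↔
        (-L ≤ x1 * y.1 + x2 * y.2) := by
      intro x1 x2
      rw [show L⁻¹ * y.1 * x1 + L⁻¹ * y.2 * x2 = L⁻¹ * (x1 * y.1 + x2 * y.2) by ring,
        inv_smul_ineq hL]
    rw [Set.mem_smul_set_iff_inv_smul_mem₀ (ne_of_gt hL), Qpoly1, polar2_convexHull]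
    simp only [Set.mem_setOf_eq, Set.mem_insert_iff, Set.mem_singleton_iff, forall_eq_or_imp,
      forall_eq, Prod.smul_fst, Prod.smul_snd, smul_eq_mul, Fin.forall_fin_succ,
      Matrix.cons_val_zero, Matrix.cons_val_one, Matrix.head_cons, Matrix.cons_val_succ,
      Fin.forall_fin_zero_pi, key]
    exact ⟨fun h => ⟨h.1, h.2.1, h.2.2, fun i => i.elim0⟩, fun h => ⟨h.1, h.2.1, h.2.2.1⟩⟩
  rw [hsm, frontierN _ _ _ (by
    intro i
    fin_cases i <;> simp <;> norm_num)]
  ext y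
  simp only [Set.mem_setOf_eq, Fin.forall_fin_succ, Fin.exists_fin_succ,
    Matrix.cons_val_zero, Matrix.cons_val_one, Matrix.head_cons, Matrix.cons_val_succ,
    Fin.forall_fin_zero_pi, IsEmpty.exists_iff]
  constructor
  · rintro ⟨⟨h1, h2, h3, -⟩, h4⟩
    refine ⟨⟨by linarith, by linarith, by linarith⟩, ?_⟩
    rcases h4 with h | h | h | h
    · left; linarith
    · right; left; linarith
    · right; right; linarith
    · exact h.elim
  · rintro ⟨⟨h1, h2, h3⟩, h4⟩
    refine ⟨⟨by linarith, by linarith, by linarith, fun i => i.elim0⟩, ?_⟩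
    rcases h4 with h | h | h
    · left; linarith
    · right; left; linarith
    · right; right; left; linarith

lemma frontier2 (p : ℤ) (L : ℝ) (hL : 0 < L) :
    frontier (L • polar2 (Qpoly2 p)) =
      {y : ℝ × ℝ | (-L ≤ y.1 - y.2 ∧ -L ≤ p * y.1 + y.2 ∧ -L ≤ (p - 1) * y.1 + y.2 ∧
          y.1 ≤ L) ∧
        (y.1 - y.2 = -L ∨ p * y.1 + y.2 = -L ∨ (p - 1) * y.1 + y.2 = -L ∨ y.1 = L)} := by
  have hsm : L • polar2 (Qpoly2 p) =
      {y : ℝ × ℝ | ∀ i : Fin 4,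
        (fun _ => -L) i ≤ ![1, (p : ℝ), (p : ℝ) - 1, -1] i * y.1 +
          ![(-1 : ℝ), 1, 1, 0] i * y.2} := by
    ext y
    have key : ∀ x1 x2 : ℝ, (-1 ≤ L⁻¹ * y.1 * x1 + L⁻¹ * y.2 * x2) ↔
        (-L ≤ x1 * y.1 + x2 * y.2) := by
      intro x1 x2
      rw [show L⁻¹ * y.1 * x1 + L⁻¹ * y.2 * x2 = L⁻¹ * (x1 * y.1 + x2 * y.2) by ring,
        inv_smul_ineq hL]
    rw [Set.mem_smul_set_iff_inv_smul_mem₀ (ne_of_gt hL), Qpoly2, polar2_convexHull]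
    simp only [Set.mem_setOf_eq, Set.mem_insert_iff, Set.mem_singleton_iff, forall_eq_or_imp,
      forall_eq, Prod.smul_fst, Prod.smul_snd, smul_eq_mul, Fin.forall_fin_succ,
      Matrix.cons_val_zero, Matrix.cons_val_one, Matrix.head_cons, Matrix.cons_val_succ,
      Fin.forall_fin_zero_pi, key]
    exact ⟨fun h => ⟨h.1, h.2.1, h.2.2.1, h.2.2.2, fun i => i.elim0⟩,
      fun h => ⟨h.1, h.2.1, h.2.2.1, h.2.2.2.1⟩⟩
  rw [hsm, frontierN _ _ _ (by
    intro i
    fin_cases i <;> norm_num)]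
  ext y
  simp only [Set.mem_setOf_eq, Fin.forall_fin_succ, Fin.exists_fin_succ,
    Matrix.cons_val_zero, Matrix.cons_val_one, Matrix.head_cons, Matrix.cons_val_succ,
    Fin.forall_fin_zero_pi, IsEmpty.exists_iff]
  constructor
  · rintro ⟨⟨h1, h2, h3, h4, -⟩, h5⟩
    refine ⟨⟨by linarith, by linarith, by linarith, by linarith⟩, ?_⟩
    rcases h5 with h | h | h | h | h
    · left; linarith
    · right; left; linarith
    · right; right; left; linarith
    · right; right; right; linarith
    · exact h.elim
  · rintro ⟨⟨h1, h2, h3, h4⟩, h5⟩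
    refine ⟨⟨by linarith, by linarith, by linarith, by linarith, fun i => i.elim0⟩, ?_⟩
    rcases h5 with h | h | h | h
    · left; linarith
    · right; left; linarith
    · right; right; left; linarith
    · right; right; right; left; linarith

lemma frontier3 (p : ℤ) (L : ℝ) (hL : 0 < L) :
    frontier (L • polar2 (Qpoly3 p)) =
      {y : ℝ × ℝ | (-L ≤ y.1 - y.2 ∧ -L ≤ p * y.1 + y.2 ∧ -L ≤ (p - 1) * y.1 + y.2 ∧
          y.1 ≤ L ∧ y.2 ≤ L) ∧
        (y.1 - y.2 = -L ∨ p * y.1 + y.2 = -L ∨ (p - 1) * y.1 + y.2 = -L ∨ y.1 = L ∨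
          y.2 = L)} := by
  have hsm : L • polar2 (Qpoly3 p) =
      {y : ℝ × ℝ | ∀ i : Fin 5,
        (fun _ => -L) i ≤ ![1, (p : ℝ), (p : ℝ) - 1, -1, 0] i * y.1 +
          ![(-1 : ℝ), 1, 1, 0, -1] i * y.2} := by
    ext y
    have key : ∀ x1 x2 : ℝ, (-1 ≤ L⁻¹ * y.1 * x1 + L⁻¹ * y.2 * x2) ↔
        (-L ≤ x1 * y.1 + x2 * y.2) := by
      intro x1 x2
      rw [show L⁻¹ * y.1 * x1 + L⁻¹ * y.2 * x2 = L⁻¹ * (x1 * y.1 + x2 * y.2) by ring,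
        inv_smul_ineq hL]
    rw [Set.mem_smul_set_iff_inv_smul_mem₀ (ne_of_gt hL), Qpoly3, polar2_convexHull]
    simp only [Set.mem_setOf_eq, Set.mem_insert_iff, Set.mem_singleton_iff, forall_eq_or_imp,
      forall_eq, Prod.smul_fst, Prod.smul_snd, smul_eq_mul, Fin.forall_fin_succ,
      Matrix.cons_val_zero, Matrix.cons_val_one, Matrix.head_cons, Matrix.cons_val_succ,
      Fin.forall_fin_zero_pi, key]
    exact ⟨fun h => ⟨h.1, h.2.1, h.2.2.1, h.2.2.2.1, h.2.2.2.2, fun i => i.elim0⟩,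
      fun h => ⟨h.1, h.2.1, h.2.2.1, h.2.2.2.1, h.2.2.2.2.1⟩⟩
  rw [hsm, frontierN _ _ _ (by
    intro i
    fin_cases i <;> norm_num)]
  ext y
  simp only [Set.mem_setOf_eq, Fin.forall_fin_succ, Fin.exists_fin_succ,
    Matrix.cons_val_zero, Matrix.cons_val_one, Matrix.head_cons, Matrix.cons_val_succ,
    Fin.forall_fin_zero_pi, IsEmpty.exists_iff]
  constructor
  · rintro ⟨⟨h1, h2, h3, h4, h5, -⟩, h6⟩
    refine ⟨⟨by linarith, by linarith, by linarith, by linarith, by linarith⟩, ?_⟩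
    rcases h6 with h | h | h | h | h | h
    · left; linarith
    · right; left; linarith
    · right; right; left; linarith
    · right; right; right; left; linarith
    · right; right; right; right; linarith
    · exact h.elim
  · rintro ⟨⟨h1, h2, h3, h4, h5⟩, h6⟩
    refine ⟨⟨by linarith, by linarith, by linarith, by linarith, by linarith,
      fun i => i.elim0⟩, ?_⟩
    rcases h6 with h | h | h | h | h
    · left; linarith
    · right; left; linarith
    · right; right; left; linarith
    · right; right; right; left; linarith
    · right; right; right; right; left; linarith

lemma neg_c_le {p c m : ℤ} (hp1 : 0 < p + 1) (h : 0 ≤ (p + 1) * (m + c)) : -c ≤ m := by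
  have h0 : (p + 1) * 0 ≤ (p + 1) * (m + c) := by simpa using h
  have := le_of_mul_le_mul_left h0 hp1
  linarith

lemma mem_iff1 (p c ℓ m n : ℤ) (hp : 1 ≤ p) (hc : 1 ≤ c) (hl : 1 ≤ ℓ)
    (h2 : 2 * ℓ = c * (p + 1)) :
    ((-ℓ ≤ m - n ∧ -ℓ ≤ p * m + n ∧ m ≤ ℓ) ∧
      (m - n = -ℓ ∨ p * m + n = -ℓ ∨ m = ℓ)) ↔
    ((m = ℓ ∧ -(ℓ * (p + 1)) ≤ n ∧ n ≤ 2 * ℓ) ∨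
     (-c ≤ m ∧ m ≤ ℓ - 1 ∧ n = m + ℓ) ∨
     (1 - c ≤ m ∧ m ≤ ℓ - 1 ∧ n = -ℓ - p * m)) := by
  have hp1 : 0 < p + 1 := by linarith
  constructor
  · rintro ⟨⟨h1, h2', h3⟩, heq⟩
    by_cases hm : m = ℓ
    · subst hm; left; exact ⟨rfl, by nlinarith, by linarith⟩
    have hm' : m ≤ ℓ - 1 := by omega
    rcases heq with h | h | h
    · right; left
      have hfac : 0 ≤ (p + 1) * (m + c) := by nlinarith
      exact ⟨neg_c_le hp1 hfac, hm', by linarith⟩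
    · by_cases hd : n = m + ℓ
      · right; left
        have hfac : 0 ≤ (p + 1) * (m + c) := by nlinarith
        exact ⟨neg_c_le hp1 hfac, hm', hd⟩
      · right; right
        have hfac : 0 ≤ (p + 1) * (m + c) := by nlinarith
        have hge : -c ≤ m := neg_c_le hp1 hfac
        have hne : m ≠ -c := by
          intro hmc
          subst hmc
          apply hd
          nlinarith
        exact ⟨by omega, hm', by linarith⟩
    · exact absurd h hm
  · rintro (⟨rfl, hn1, hn2⟩ | ⟨ha, hb, rfl⟩ | ⟨ha, hb, rfl⟩)
    · exact ⟨⟨by linarith, by nlinarith, le_refl _⟩, Or.inr (Or.inr rfl)⟩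
    · have hfac : 0 ≤ (p + 1) * (m + c) := mul_nonneg (by linarith) (by linarith)
      exact ⟨⟨by linarith, by nlinarith, by linarith⟩, Or.inl (by ring)⟩
    · have hfac : 0 ≤ (p + 1) * (m + c) := mul_nonneg (by linarith) (by linarith)
      exact ⟨⟨by nlinarith, by linarith, by linarith⟩, Or.inr (Or.inl (by ring))⟩

lemma mem_iff2 (p c ℓ m n : ℤ) (hp : 1 ≤ p) (hc : 1 ≤ c) (hl : 1 ≤ ℓ)
    (h2 : 2 * ℓ = c * (p + 1)) :
    ((-ℓ ≤ m - n ∧ -ℓ ≤ p * m + n ∧ -ℓ ≤ (p - 1) * m + n ∧ m ≤ ℓ) ∧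
      (m - n = -ℓ ∨ p * m + n = -ℓ ∨ (p - 1) * m + n = -ℓ ∨ m = ℓ)) ↔
    ((m = ℓ ∧ -(p * ℓ) ≤ n ∧ n ≤ 2 * ℓ) ∨
     (-c ≤ m ∧ m ≤ ℓ - 1 ∧ n = m + ℓ) ∨
     (0 ≤ m ∧ m ≤ ℓ - 1 ∧ n = -ℓ - (p - 1) * m) ∨
     (1 - c ≤ m ∧ m ≤ -1 ∧ n = -ℓ - p * m)) := by
  have hp1 : 0 < p + 1 := by linarith
  constructor
  · rintro ⟨⟨h1, h2', h2b, h3⟩, heq⟩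
    by_cases hm : m = ℓ
    · subst hm; left; exact ⟨rfl, by nlinarith, by linarith⟩
    have hm' : m ≤ ℓ - 1 := by omega
    rcases heq with h | h | h | h
    · right; left
      have hfac : 0 ≤ (p + 1) * (m + c) := by nlinarith
      exact ⟨neg_c_le hp1 hfac, hm', by linarith⟩
    · by_cases hm0 : m = 0
      · subst hm0; right; right; left
        exact ⟨le_refl _, by omega, by linarith⟩
      by_cases hmc : m = -c
      · subst hmc; right; left
        exact ⟨le_refl _, hm', by nlinarith⟩
      · right; right; right
        have hle0 : m ≤ 0 := by nlinarith
        have hle : m ≤ -1 := by omega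
        have hfac : 0 ≤ (p + 1) * (m + c) := by nlinarith
        have hge : -c ≤ m := neg_c_le hp1 hfac
        exact ⟨by omega, hle, by linarith⟩
    · right; right; left
      exact ⟨by nlinarith, hm', by linarith⟩
    · exact absurd h hm
  · rintro (⟨rfl, hn1, hn2⟩ | ⟨ha, hb, rfl⟩ | ⟨ha, hb, rfl⟩ | ⟨ha, hb, rfl⟩)
    · exact ⟨⟨by linarith, by nlinarith, by nlinarith, le_refl _⟩,
        Or.inr (Or.inr (Or.inr rfl))⟩
    · have hfac : 0 ≤ (p + 1) * (m + c) := mul_nonneg (by linarith) (by linarith)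
      have h2b : -ℓ ≤ (p - 1) * m + (m + ℓ) := by
        rcases le_or_gt 0 m with h | h
        · nlinarith [mul_nonneg (show (0:ℤ) ≤ p by linarith) h]
        · nlinarith
      exact ⟨⟨by linarith, by nlinarith, h2b, by linarith⟩, Or.inl (by ring)⟩
    · have hpm : 0 ≤ p * m := mul_nonneg (by linarith) ha
      exact ⟨⟨by nlinarith, by linarith, by linarith, by linarith⟩,
        Or.inr (Or.inr (Or.inl (by ring)))⟩
    · have hfac : 0 ≤ (p + 1) * (m + c) := mul_nonneg (by linarith) (by linarith)
      exact ⟨⟨by nlinarith, by linarith, by linarith, by linarith⟩,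
        Or.inr (Or.inl (by ring))⟩

lemma mem_iff3 (p c ℓ m n : ℤ) (hp : 1 ≤ p) (hc : 1 ≤ c) (hl : 1 ≤ ℓ)
    (h2 : 2 * ℓ = c * (p + 1)) :
    ((-ℓ ≤ m - n ∧ -ℓ ≤ p * m + n ∧ -ℓ ≤ (p - 1) * m + n ∧ m ≤ ℓ ∧ n ≤ ℓ) ∧
      (m - n = -ℓ ∨ p * m + n = -ℓ ∨ (p - 1) * m + n = -ℓ ∨ m = ℓ ∨ n = ℓ)) ↔
    ((m = ℓ ∧ -(p * ℓ) ≤ n ∧ n ≤ ℓ) ∨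
     (0 ≤ m ∧ m ≤ ℓ - 1 ∧ n = ℓ) ∨
     (-c ≤ m ∧ m ≤ -1 ∧ n = m + ℓ) ∨
     (0 ≤ m ∧ m ≤ ℓ - 1 ∧ n = -ℓ - (p - 1) * m) ∨
     (1 - c ≤ m ∧ m ≤ -1 ∧ n = -ℓ - p * m)) := by
  have hp1 : 0 < p + 1 := by linarith
  constructor
  · rintro ⟨⟨h1, h2', h2b, h3, h4⟩, heq⟩
    by_cases hm : m = ℓ
    · subst hm; left; exact ⟨rfl, by nlinarith, h4⟩
    have hm' : m ≤ ℓ - 1 := by omega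
    by_cases hn : n = ℓ
    · subst hn; right; left
      exact ⟨by linarith, hm', rfl⟩
    rcases heq with h | h | h | h | h
    · right; right; left
      have hfac : 0 ≤ (p + 1) * (m + c) := by nlinarith
      have hm0 : m ≠ 0 := by
        intro h0; subst h0; apply hn; linarith
      exact ⟨neg_c_le hp1 hfac, by omega, by linarith⟩
    · by_cases hm0 : m = 0
      · subst hm0; right; right; right; left
        exact ⟨le_refl _, by omega, by linarith⟩
      by_cases hmc : m = -c
      · subst hmc; right; right; left
        exact ⟨le_refl _, by omega, by nlinarith⟩
      · right; right; right; right
        have hle0 : m ≤ 0 := by nlinarith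
        have hle : m ≤ -1 := by omega
        have hfac : 0 ≤ (p + 1) * (m + c) := by nlinarith
        have hge : -c ≤ m := neg_c_le hp1 hfac
        exact ⟨by omega, hle, by linarith⟩
    · right; right; right; left
      exact ⟨by nlinarith, hm', by linarith⟩
    · exact absurd h hm
    · exact absurd h hn
  · rintro (⟨rfl, hn1, hn2⟩ | ⟨ha, hb, rfl⟩ | ⟨ha, hb, rfl⟩ | ⟨ha, hb, rfl⟩ |
      ⟨ha, hb, rfl⟩)
    · exact ⟨⟨by linarith, by nlinarith, by nlinarith, le_refl _, hn2⟩,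
        Or.inr (Or.inr (Or.inr (Or.inl rfl)))⟩
    · have hpm : 0 ≤ p * m := mul_nonneg (by linarith) ha
      have hpm1 : 0 ≤ (p - 1) * m := mul_nonneg (by linarith) ha
      exact ⟨⟨by linarith, by linarith, by linarith, by linarith, le_refl _⟩,
        Or.inr (Or.inr (Or.inr (Or.inr rfl)))⟩
    · have hfac : 0 ≤ (p + 1) * (m + c) := mul_nonneg (by linarith) (by linarith)
      exact ⟨⟨by linarith, by nlinarith, by nlinarith, by linarith, by linarith⟩,
        Or.inl (by ring)⟩
    · have hpm : 0 ≤ p * m := mul_nonneg (by linarith) ha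
      have hpm1 : 0 ≤ (p - 1) * m := mul_nonneg (by linarith) ha
      exact ⟨⟨by nlinarith, by linarith, by linarith, by linarith, by linarith⟩,
        Or.inr (Or.inr (Or.inl (by ring)))⟩
    · have hfac : 0 ≤ (p + 1) * (m + c) := mul_nonneg (by linarith) (by linarith)
      have hfac2 : 0 ≤ p * (m - 1 + c) := mul_nonneg (by linarith) (by linarith)
      exact ⟨⟨by nlinarith, by linarith, by linarith, by linarith, by nlinarith⟩,
        Or.inr (Or.inl (by ring))⟩

def emb : ℤ × ℤ → ℝ × ℝ := fun q => ((q.1 : ℝ), (q.2 : ℝ))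

lemma emb_inj : Function.Injective emb := by
  rintro ⟨a, b⟩ ⟨c, d⟩ h
  simp only [emb, Prod.mk.injEq, Int.cast_injective.eq_iff] at h
  exact Prod.ext h.1 h.2

noncomputable def Fk1 (p c ℓ : ℤ) : Finset (ℤ × ℤ) :=
  ((Finset.Icc (-(ℓ * (p + 1))) (2 * ℓ)).image fun n => (ℓ, n)) ∪
  ((Finset.Icc (-c) (ℓ - 1)).image fun m => (m, m + ℓ)) ∪
  ((Finset.Icc (1 - c) (ℓ - 1)).image fun m => (m, -ℓ - p * m))

lemma mem_Fk1 (p c ℓ m n : ℤ) : (m, n) ∈ Fk1 p c ℓ ↔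
    ((m = ℓ ∧ -(ℓ * (p + 1)) ≤ n ∧ n ≤ 2 * ℓ) ∨
     (-c ≤ m ∧ m ≤ ℓ - 1 ∧ n = m + ℓ) ∨
     (1 - c ≤ m ∧ m ≤ ℓ - 1 ∧ n = -ℓ - p * m)) := by
  simp only [Fk1, Finset.mem_union, Finset.mem_image, Finset.mem_Icc, Prod.mk.injEq]
  constructor
  · rintro ((⟨a, ha, rfl, rfl⟩ | ⟨a, ha, rfl, rfl⟩) | ⟨a, ha, rfl, rfl⟩)
    · exact Or.inl ⟨rfl, ha.1, ha.2⟩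
    · exact Or.inr (Or.inl ⟨ha.1, ha.2, rfl⟩)
    · exact Or.inr (Or.inr ⟨ha.1, ha.2, rfl⟩)
  · rintro (⟨rfl, h1, h2⟩ | ⟨h1, h2, rfl⟩ | ⟨h1, h2, rfl⟩)
    · exact Or.inl (Or.inl ⟨n, ⟨h1, h2⟩, rfl, rfl⟩)
    · exact Or.inl (Or.inr ⟨m, ⟨h1, h2⟩, rfl, rfl⟩)
    · exact Or.inr ⟨m, ⟨h1, h2⟩, rfl, rfl⟩

lemma card_Fk1 (p c ℓ : ℤ) (hp : 1 ≤ p) (hc : 1 ≤ c) (hl : 1 ≤ ℓ)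
    (h2 : 2 * ℓ = c * (p + 1)) :
    ((Fk1 p c ℓ).card : ℤ) = ℓ * (p + 5) + 2 * c := by
  have hp1 : (0:ℤ) < p + 1 := by linarith
  have inj1 : Function.Injective (fun n : ℤ => ((ℓ, n) : ℤ × ℤ)) := by
    intro a b h; simpa using h
  have inj2 : Function.Injective (fun m : ℤ => ((m, m + ℓ) : ℤ × ℤ)) := by
    intro a b h; exact congrArg Prod.fst h
  have inj3 : Function.Injective (fun m : ℤ => ((m, -ℓ - p * m) : ℤ × ℤ)) := by
    intro a b h; exact congrArg Prod.fst h
  have d12 : Disjoint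
      ((Finset.Icc (-(ℓ * (p + 1))) (2 * ℓ)).image fun n => ((ℓ, n) : ℤ × ℤ))
      ((Finset.Icc (-c) (ℓ - 1)).image fun m => ((m, m + ℓ) : ℤ × ℤ)) := by
    rw [Finset.disjoint_left]
    rintro ⟨m, n⟩ hA hB
    simp only [Finset.mem_image, Finset.mem_Icc, Prod.mk.injEq] at hA hB
    obtain ⟨a, ha, rfl, rfl⟩ := hA
    obtain ⟨b, hb, hb1, hb2⟩ := hB
    omega
  have d13 : Disjoint
      ((Finset.Icc (-(ℓ * (p + 1))) (2 * ℓ)).image fun n => ((ℓ, n) : ℤ × ℤ))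
      ((Finset.Icc (1 - c) (ℓ - 1)).image fun m => ((m, -ℓ - p * m) : ℤ × ℤ)) := by
    rw [Finset.disjoint_left]
    rintro ⟨m, n⟩ hA hB
    simp only [Finset.mem_image, Finset.mem_Icc, Prod.mk.injEq] at hA hB
    obtain ⟨a, ha, rfl, rfl⟩ := hA
    obtain ⟨b, hb, hb1, hb2⟩ := hB
    omega
  have d23 : Disjoint
      ((Finset.Icc (-c) (ℓ - 1)).image fun m => ((m, m + ℓ) : ℤ × ℤ))
      ((Finset.Icc (1 - c) (ℓ - 1)).image fun m => ((m, -ℓ - p * m) : ℤ × ℤ)) := by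
    rw [Finset.disjoint_left]
    rintro ⟨m, n⟩ hA hB
    simp only [Finset.mem_image, Finset.mem_Icc, Prod.mk.injEq] at hA hB
    obtain ⟨a, ha, rfl, rfl⟩ := hA
    obtain ⟨b, hb, rfl, hb2⟩ := hB
    have : (p + 1) * (b + c) = 0 := by linarith
    have hb3 : b + c = 0 := by
      rcases mul_eq_zero.1 this with h | h
      · omega
      · exact h
    omega
  rw [Fk1, Finset.card_union_of_disjoint (by
      rw [Finset.disjoint_union_left]; exact ⟨d13, d23⟩),
    Finset.card_union_of_disjoint d12,
    Finset.card_image_of_injective _ inj1, Finset.card_image_of_injective _ inj2,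
    Finset.card_image_of_injective _ inj3]
  have e1 : (((Finset.Icc (-(ℓ * (p + 1))) (2 * ℓ)).card : ℕ) : ℤ) =
      2 * ℓ + 1 - (-(ℓ * (p + 1))) := Int.card_Icc_of_le _ _ (by nlinarith)
  have e2 : (((Finset.Icc (-c) (ℓ - 1)).card : ℕ) : ℤ) = ℓ - 1 + 1 - (-c) :=
    Int.card_Icc_of_le _ _ (by linarith)
  have e3 : (((Finset.Icc (1 - c) (ℓ - 1)).card : ℕ) : ℤ) = ℓ - 1 + 1 - (1 - c) :=
    Int.card_Icc_of_le _ _ (by linarith)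
  push_cast
  rw [e1, e2, e3]
  ring

lemma latt1 (p c ℓ : ℤ) (hp : 1 ≤ p) (hc : 1 ≤ c) (hl : 1 ≤ ℓ)
    (h2 : 2 * ℓ = c * (p + 1)) :
    frontier ((ℓ : ℝ) • polar2 (Qpoly1 p)) ∩ latticePts = emb '' ↑(Fk1 p c ℓ) := by
  have hL : (0 : ℝ) < (ℓ : ℝ) := by exact_mod_cast hl
  rw [frontier1 p _ hL]
  ext x
  constructor
  · rintro ⟨hfr, hlat⟩
    obtain ⟨m, n, rfl⟩ := hlat
    simp only [Set.mem_setOf_eq] at hfr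
    refine ⟨(m, n), ?_, rfl⟩
    rw [Finset.mem_coe, mem_Fk1]
    apply (mem_iff1 p c ℓ m n hp hc hl h2).mp
    obtain ⟨⟨h1, h2', h3⟩, heq⟩ := hfr
    refine ⟨⟨by exact_mod_cast h1, by exact_mod_cast h2', by exact_mod_cast h3⟩, ?_⟩
    rcases heq with h | h | h
    · exact Or.inl (by exact_mod_cast h)
    · exact Or.inr (Or.inl (by exact_mod_cast h))
    · exact Or.inr (Or.inr (by exact_mod_cast h))
  · rintro ⟨⟨m, n⟩, hmem, rfl⟩
    rw [Finset.mem_coe, mem_Fk1] at hmem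
    obtain ⟨⟨h1, h2', h3⟩, heq⟩ := (mem_iff1 p c ℓ m n hp hc hl h2).mpr hmem
    refine ⟨?_, m, n, rfl⟩
    simp only [Set.mem_setOf_eq, emb]
    refine ⟨⟨by exact_mod_cast h1, by exact_mod_cast h2', by exact_mod_cast h3⟩, ?_⟩
    rcases heq with h | h | h
    · exact Or.inl (by exact_mod_cast h)
    · exact Or.inr (Or.inl (by exact_mod_cast h))
    · exact Or.inr (Or.inr (by exact_mod_cast h))

noncomputable def Fk2 (p c ℓ : ℤ) : Finset (ℤ × ℤ) :=
  ((Finset.Icc (-(p * ℓ)) (2 * ℓ)).image fun n => (ℓ, n)) ∪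
  ((Finset.Icc (-c) (ℓ - 1)).image fun m => (m, m + ℓ)) ∪
  ((Finset.Icc 0 (ℓ - 1)).image fun m => (m, -ℓ - (p - 1) * m)) ∪
  ((Finset.Icc (1 - c) (-1)).image fun m => (m, -ℓ - p * m))

lemma mem_Fk2 (p c ℓ m n : ℤ) : (m, n) ∈ Fk2 p c ℓ ↔
    ((m = ℓ ∧ -(p * ℓ) ≤ n ∧ n ≤ 2 * ℓ) ∨
     (-c ≤ m ∧ m ≤ ℓ - 1 ∧ n = m + ℓ) ∨
     (0 ≤ m ∧ m ≤ ℓ - 1 ∧ n = -ℓ - (p - 1) * m) ∨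
     (1 - c ≤ m ∧ m ≤ -1 ∧ n = -ℓ - p * m)) := by
  simp only [Fk2, Finset.mem_union, Finset.mem_image, Finset.mem_Icc, Prod.mk.injEq]
  constructor
  · rintro (((⟨a, ha, rfl, rfl⟩ | ⟨a, ha, rfl, rfl⟩) | ⟨a, ha, rfl, rfl⟩) | ⟨a, ha, rfl, rfl⟩)
    · exact Or.inl ⟨rfl, ha.1, ha.2⟩
    · exact Or.inr (Or.inl ⟨ha.1, ha.2, rfl⟩)
    · exact Or.inr (Or.inr (Or.inl ⟨ha.1, ha.2, rfl⟩))
    · exact Or.inr (Or.inr (Or.inr ⟨ha.1, ha.2, rfl⟩))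
  · rintro (⟨rfl, h1, h2⟩ | ⟨h1, h2, rfl⟩ | ⟨h1, h2, rfl⟩ | ⟨h1, h2, rfl⟩)
    · exact Or.inl (Or.inl (Or.inl ⟨n, ⟨h1, h2⟩, rfl, rfl⟩))
    · exact Or.inl (Or.inl (Or.inr ⟨m, ⟨h1, h2⟩, rfl, rfl⟩))
    · exact Or.inl (Or.inr ⟨m, ⟨h1, h2⟩, rfl, rfl⟩)
    · exact Or.inr ⟨m, ⟨h1, h2⟩, rfl, rfl⟩

lemma card_Fk2 (p c ℓ : ℤ) (hp : 1 ≤ p) (hc : 1 ≤ c) (hl : 1 ≤ ℓ)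
    (h2 : 2 * ℓ = c * (p + 1)) :
    ((Fk2 p c ℓ).card : ℤ) = ℓ * (p + 4) + 2 * c := by
  have hp1 : (0:ℤ) < p + 1 := by linarith
  have inj1 : Function.Injective (fun n : ℤ => ((ℓ, n) : ℤ × ℤ)) := by
    intro a b h; simpa using h
  have inj2 : Function.Injective (fun m : ℤ => ((m, m + ℓ) : ℤ × ℤ)) := by
    intro a b h; exact congrArg Prod.fst h
  have inj3 : Function.Injective (fun m : ℤ => ((m, -ℓ - (p - 1) * m) : ℤ × ℤ)) := by
    intro a b h; exact congrArg Prod.fst h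
  have inj4 : Function.Injective (fun m : ℤ => ((m, -ℓ - p * m) : ℤ × ℤ)) := by
    intro a b h; exact congrArg Prod.fst h
  have d12 : Disjoint
      ((Finset.Icc (-(p * ℓ)) (2 * ℓ)).image fun n => ((ℓ, n) : ℤ × ℤ))
      ((Finset.Icc (-c) (ℓ - 1)).image fun m => ((m, m + ℓ) : ℤ × ℤ)) := by
    rw [Finset.disjoint_left]
    rintro ⟨m, n⟩ hA hB
    simp only [Finset.mem_image, Finset.mem_Icc, Prod.mk.injEq] at hA hB
    obtain ⟨a, ha, rfl, rfl⟩ := hA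
    obtain ⟨b, hb, hb1, hb2⟩ := hB
    omega
  have d13 : Disjoint
      ((Finset.Icc (-(p * ℓ)) (2 * ℓ)).image fun n => ((ℓ, n) : ℤ × ℤ))
      ((Finset.Icc 0 (ℓ - 1)).image fun m => ((m, -ℓ - (p - 1) * m) : ℤ × ℤ)) := by
    rw [Finset.disjoint_left]
    rintro ⟨m, n⟩ hA hB
    simp only [Finset.mem_image, Finset.mem_Icc, Prod.mk.injEq] at hA hB
    obtain ⟨a, ha, rfl, rfl⟩ := hA
    obtain ⟨b, hb, hb1, hb2⟩ := hB
    omega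
  have d14 : Disjoint
      ((Finset.Icc (-(p * ℓ)) (2 * ℓ)).image fun n => ((ℓ, n) : ℤ × ℤ))
      ((Finset.Icc (1 - c) (-1)).image fun m => ((m, -ℓ - p * m) : ℤ × ℤ)) := by
    rw [Finset.disjoint_left]
    rintro ⟨m, n⟩ hA hB
    simp only [Finset.mem_image, Finset.mem_Icc, Prod.mk.injEq] at hA hB
    obtain ⟨a, ha, rfl, rfl⟩ := hA
    obtain ⟨b, hb, hb1, hb2⟩ := hB
    omega
  have d23 : Disjoint
      ((Finset.Icc (-c) (ℓ - 1)).image fun m => ((m, m + ℓ) : ℤ × ℤ))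
      ((Finset.Icc 0 (ℓ - 1)).image fun m => ((m, -ℓ - (p - 1) * m) : ℤ × ℤ)) := by
    rw [Finset.disjoint_left]
    rintro ⟨m, n⟩ hA hB
    simp only [Finset.mem_image, Finset.mem_Icc, Prod.mk.injEq] at hA hB
    obtain ⟨a, ha, rfl, rfl⟩ := hA
    obtain ⟨b, hb, rfl, hb2⟩ := hB
    have hpb : 0 ≤ p * b := mul_nonneg (by linarith) hb.1
    nlinarith [hb2]
  have d24 : Disjoint
      ((Finset.Icc (-c) (ℓ - 1)).image fun m => ((m, m + ℓ) : ℤ × ℤ))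
      ((Finset.Icc (1 - c) (-1)).image fun m => ((m, -ℓ - p * m) : ℤ × ℤ)) := by
    rw [Finset.disjoint_left]
    rintro ⟨m, n⟩ hA hB
    simp only [Finset.mem_image, Finset.mem_Icc, Prod.mk.injEq] at hA hB
    obtain ⟨a, ha, rfl, rfl⟩ := hA
    obtain ⟨b, hb, rfl, hb2⟩ := hB
    have hz : (p + 1) * (b + c) = 0 := by linarith
    have hb3 : b + c = 0 := by
      rcases mul_eq_zero.1 hz with h | h
      · omega
      · exact h
    omega
  have d34 : Disjoint
      ((Finset.Icc 0 (ℓ - 1)).image fun m => ((m, -ℓ - (p - 1) * m) : ℤ × ℤ))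
      ((Finset.Icc (1 - c) (-1)).image fun m => ((m, -ℓ - p * m) : ℤ × ℤ)) := by
    rw [Finset.disjoint_left]
    rintro ⟨m, n⟩ hA hB
    simp only [Finset.mem_image, Finset.mem_Icc, Prod.mk.injEq] at hA hB
    obtain ⟨a, ha, rfl, rfl⟩ := hA
    obtain ⟨b, hb, rfl, hb2⟩ := hB
    omega
  rw [Fk2, Finset.card_union_of_disjoint (by
      rw [Finset.disjoint_union_left, Finset.disjoint_union_left]
      exact ⟨⟨d14, d24⟩, d34⟩),
    Finset.card_union_of_disjoint (by
      rw [Finset.disjoint_union_left]; exact ⟨d13, d23⟩),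
    Finset.card_union_of_disjoint d12,
    Finset.card_image_of_injective _ inj1, Finset.card_image_of_injective _ inj2,
    Finset.card_image_of_injective _ inj3, Finset.card_image_of_injective _ inj4]
  have e1 : (((Finset.Icc (-(p * ℓ)) (2 * ℓ)).card : ℕ) : ℤ) =
      2 * ℓ + 1 - (-(p * ℓ)) := Int.card_Icc_of_le _ _ (by nlinarith)
  have e2 : (((Finset.Icc (-c) (ℓ - 1)).card : ℕ) : ℤ) = ℓ - 1 + 1 - (-c) :=
    Int.card_Icc_of_le _ _ (by linarith)
  have e3 : (((Finset.Icc (0:ℤ) (ℓ - 1)).card : ℕ) : ℤ) = ℓ - 1 + 1 - 0 :=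
    Int.card_Icc_of_le _ _ (by linarith)
  have e4 : (((Finset.Icc (1 - c) (-1:ℤ)).card : ℕ) : ℤ) = -1 + 1 - (1 - c) :=
    Int.card_Icc_of_le _ _ (by linarith)
  push_cast
  rw [e1, e2, e3, e4]
  ring

lemma latt2 (p c ℓ : ℤ) (hp : 1 ≤ p) (hc : 1 ≤ c) (hl : 1 ≤ ℓ)
    (h2 : 2 * ℓ = c * (p + 1)) :
    frontier ((ℓ : ℝ) • polar2 (Qpoly2 p)) ∩ latticePts = emb '' ↑(Fk2 p c ℓ) := by
  have hL : (0 : ℝ) < (ℓ : ℝ) := by exact_mod_cast hl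
  rw [frontier2 p _ hL]
  ext x
  constructor
  · rintro ⟨hfr, hlat⟩
    obtain ⟨m, n, rfl⟩ := hlat
    simp only [Set.mem_setOf_eq] at hfr
    refine ⟨(m, n), ?_, rfl⟩
    rw [Finset.mem_coe, mem_Fk2]
    apply (mem_iff2 p c ℓ m n hp hc hl h2).mp
    obtain ⟨⟨h1, h2', h2b, h3⟩, heq⟩ := hfr
    refine ⟨⟨by exact_mod_cast h1, by exact_mod_cast h2', by exact_mod_cast h2b,
      by exact_mod_cast h3⟩, ?_⟩
    rcases heq with h | h | h | h
    · exact Or.inl (by exact_mod_cast h)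
    · exact Or.inr (Or.inl (by exact_mod_cast h))
    · exact Or.inr (Or.inr (Or.inl (by exact_mod_cast h)))
    · exact Or.inr (Or.inr (Or.inr (by exact_mod_cast h)))
  · rintro ⟨⟨m, n⟩, hmem, rfl⟩
    rw [Finset.mem_coe, mem_Fk2] at hmem
    obtain ⟨⟨h1, h2', h2b, h3⟩, heq⟩ := (mem_iff2 p c ℓ m n hp hc hl h2).mpr hmem
    refine ⟨?_, m, n, rfl⟩
    simp only [Set.mem_setOf_eq, emb]
    refine ⟨⟨by exact_mod_cast h1, by exact_mod_cast h2', by exact_mod_cast h2b,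
      by exact_mod_cast h3⟩, ?_⟩
    rcases heq with h | h | h | h
    · exact Or.inl (by exact_mod_cast h)
    · exact Or.inr (Or.inl (by exact_mod_cast h))
    · exact Or.inr (Or.inr (Or.inl (by exact_mod_cast h)))
    · exact Or.inr (Or.inr (Or.inr (by exact_mod_cast h)))

noncomputable def Fk3 (p c ℓ : ℤ) : Finset (ℤ × ℤ) :=
  ((Finset.Icc (-(p * ℓ)) ℓ).image fun n => (ℓ, n)) ∪
  ((Finset.Icc 0 (ℓ - 1)).image fun m => (m, ℓ)) ∪
  ((Finset.Icc (-c) (-1)).image fun m => (m, m + ℓ)) ∪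
  ((Finset.Icc 0 (ℓ - 1)).image fun m => (m, -ℓ - (p - 1) * m)) ∪
  ((Finset.Icc (1 - c) (-1)).image fun m => (m, -ℓ - p * m))

lemma mem_Fk3 (p c ℓ m n : ℤ) : (m, n) ∈ Fk3 p c ℓ ↔
    ((m = ℓ ∧ -(p * ℓ) ≤ n ∧ n ≤ ℓ) ∨
     (0 ≤ m ∧ m ≤ ℓ - 1 ∧ n = ℓ) ∨
     (-c ≤ m ∧ m ≤ -1 ∧ n = m + ℓ) ∨
     (0 ≤ m ∧ m ≤ ℓ - 1 ∧ n = -ℓ - (p - 1) * m) ∨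
     (1 - c ≤ m ∧ m ≤ -1 ∧ n = -ℓ - p * m)) := by
  simp only [Fk3, Finset.mem_union, Finset.mem_image, Finset.mem_Icc, Prod.mk.injEq]
  constructor
  · rintro ((((⟨a, ha, rfl, rfl⟩ | ⟨a, ha, rfl, rfl⟩) | ⟨a, ha, rfl, rfl⟩) |
      ⟨a, ha, rfl, rfl⟩) | ⟨a, ha, rfl, rfl⟩)
    · exact Or.inl ⟨rfl, ha.1, ha.2⟩
    · exact Or.inr (Or.inl ⟨ha.1, ha.2, rfl⟩)
    · exact Or.inr (Or.inr (Or.inl ⟨ha.1, ha.2, rfl⟩))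
    · exact Or.inr (Or.inr (Or.inr (Or.inl ⟨ha.1, ha.2, rfl⟩)))
    · exact Or.inr (Or.inr (Or.inr (Or.inr ⟨ha.1, ha.2, rfl⟩)))
  · rintro (⟨rfl, h1, h2⟩ | ⟨h1, h2, rfl⟩ | ⟨h1, h2, rfl⟩ | ⟨h1, h2, rfl⟩ | ⟨h1, h2, rfl⟩)
    · exact Or.inl (Or.inl (Or.inl (Or.inl ⟨n, ⟨h1, h2⟩, rfl, rfl⟩)))
    · exact Or.inl (Or.inl (Or.inl (Or.inr ⟨m, ⟨h1, h2⟩, rfl, rfl⟩)))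
    · exact Or.inl (Or.inl (Or.inr ⟨m, ⟨h1, h2⟩, rfl, rfl⟩))
    · exact Or.inl (Or.inr ⟨m, ⟨h1, h2⟩, rfl, rfl⟩)
    · exact Or.inr ⟨m, ⟨h1, h2⟩, rfl, rfl⟩

lemma card_Fk3 (p c ℓ : ℤ) (hp : 1 ≤ p) (hc : 1 ≤ c) (hl : 1 ≤ ℓ)
    (h2 : 2 * ℓ = c * (p + 1)) :
    ((Fk3 p c ℓ).card : ℤ) = ℓ * (p + 3) + 2 * c := by
  have hp1 : (0:ℤ) < p + 1 := by linarith
  have inj1 : Function.Injective (fun n : ℤ => ((ℓ, n) : ℤ × ℤ)) := by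
    intro a b h; simpa using h
  have inj2 : Function.Injective (fun m : ℤ => ((m, ℓ) : ℤ × ℤ)) := by
    intro a b h; exact congrArg Prod.fst h
  have inj3 : Function.Injective (fun m : ℤ => ((m, m + ℓ) : ℤ × ℤ)) := by
    intro a b h; exact congrArg Prod.fst h
  have inj4 : Function.Injective (fun m : ℤ => ((m, -ℓ - (p - 1) * m) : ℤ × ℤ)) := by
    intro a b h; exact congrArg Prod.fst h
  have inj5 : Function.Injective (fun m : ℤ => ((m, -ℓ - p * m) : ℤ × ℤ)) := by
    intro a b h; exact congrArg Prod.fst h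
  have d12 : Disjoint
      ((Finset.Icc (-(p * ℓ)) ℓ).image fun n => ((ℓ, n) : ℤ × ℤ))
      ((Finset.Icc 0 (ℓ - 1)).image fun m => ((m, ℓ) : ℤ × ℤ)) := by
    rw [Finset.disjoint_left]
    rintro ⟨m, n⟩ hA hB
    simp only [Finset.mem_image, Finset.mem_Icc, Prod.mk.injEq] at hA hB
    obtain ⟨a, ha, rfl, rfl⟩ := hA
    obtain ⟨b, hb, hb1, hb2⟩ := hB
    omega
  have d13 : Disjoint
      ((Finset.Icc (-(p * ℓ)) ℓ).image fun n => ((ℓ, n) : ℤ × ℤ))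
      ((Finset.Icc (-c) (-1)).image fun m => ((m, m + ℓ) : ℤ × ℤ)) := by
    rw [Finset.disjoint_left]
    rintro ⟨m, n⟩ hA hB
    simp only [Finset.mem_image, Finset.mem_Icc, Prod.mk.injEq] at hA hB
    obtain ⟨a, ha, rfl, rfl⟩ := hA
    obtain ⟨b, hb, hb1, hb2⟩ := hB
    omega
  have d14 : Disjoint
      ((Finset.Icc (-(p * ℓ)) ℓ).image fun n => ((ℓ, n) : ℤ × ℤ))
      ((Finset.Icc 0 (ℓ - 1)).image fun m => ((m, -ℓ - (p - 1) * m) : ℤ × ℤ)) := by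
    rw [Finset.disjoint_left]
    rintro ⟨m, n⟩ hA hB
    simp only [Finset.mem_image, Finset.mem_Icc, Prod.mk.injEq] at hA hB
    obtain ⟨a, ha, rfl, rfl⟩ := hA
    obtain ⟨b, hb, hb1, hb2⟩ := hB
    omega
  have d15 : Disjoint
      ((Finset.Icc (-(p * ℓ)) ℓ).image fun n => ((ℓ, n) : ℤ × ℤ))
      ((Finset.Icc (1 - c) (-1)).image fun m => ((m, -ℓ - p * m) : ℤ × ℤ)) := by
    rw [Finset.disjoint_left]
    rintro ⟨m, n⟩ hA hB
    simp only [Finset.mem_image, Finset.mem_Icc, Prod.mk.injEq] at hA hB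
    obtain ⟨a, ha, rfl, rfl⟩ := hA
    obtain ⟨b, hb, hb1, hb2⟩ := hB
    omega
  have d23 : Disjoint
      ((Finset.Icc 0 (ℓ - 1)).image fun m => ((m, ℓ) : ℤ × ℤ))
      ((Finset.Icc (-c) (-1)).image fun m => ((m, m + ℓ) : ℤ × ℤ)) := by
    rw [Finset.disjoint_left]
    rintro ⟨m, n⟩ hA hB
    simp only [Finset.mem_image, Finset.mem_Icc, Prod.mk.injEq] at hA hB
    obtain ⟨a, ha, rfl, rfl⟩ := hA
    obtain ⟨b, hb, rfl, hb2⟩ := hB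
    omega
  have d24 : Disjoint
      ((Finset.Icc 0 (ℓ - 1)).image fun m => ((m, ℓ) : ℤ × ℤ))
      ((Finset.Icc 0 (ℓ - 1)).image fun m => ((m, -ℓ - (p - 1) * m) : ℤ × ℤ)) := by
    rw [Finset.disjoint_left]
    rintro ⟨m, n⟩ hA hB
    simp only [Finset.mem_image, Finset.mem_Icc, Prod.mk.injEq] at hA hB
    obtain ⟨a, ha, rfl, rfl⟩ := hA
    obtain ⟨b, hb, rfl, hb2⟩ := hB
    have hpb : 0 ≤ (p - 1) * b := mul_nonneg (by linarith) hb.1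
    nlinarith [hb2]
  have d25 : Disjoint
      ((Finset.Icc 0 (ℓ - 1)).image fun m => ((m, ℓ) : ℤ × ℤ))
      ((Finset.Icc (1 - c) (-1)).image fun m => ((m, -ℓ - p * m) : ℤ × ℤ)) := by
    rw [Finset.disjoint_left]
    rintro ⟨m, n⟩ hA hB
    simp only [Finset.mem_image, Finset.mem_Icc, Prod.mk.injEq] at hA hB
    obtain ⟨a, ha, rfl, rfl⟩ := hA
    obtain ⟨b, hb, rfl, hb2⟩ := hB
    omega
  have d34 : Disjoint
      ((Finset.Icc (-c) (-1)).image fun m => ((m, m + ℓ) : ℤ × ℤ))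
      ((Finset.Icc 0 (ℓ - 1)).image fun m => ((m, -ℓ - (p - 1) * m) : ℤ × ℤ)) := by
    rw [Finset.disjoint_left]
    rintro ⟨m, n⟩ hA hB
    simp only [Finset.mem_image, Finset.mem_Icc, Prod.mk.injEq] at hA hB
    obtain ⟨a, ha, rfl, rfl⟩ := hA
    obtain ⟨b, hb, rfl, hb2⟩ := hB
    omega
  have d35 : Disjoint
      ((Finset.Icc (-c) (-1)).image fun m => ((m, m + ℓ) : ℤ × ℤ))
      ((Finset.Icc (1 - c) (-1)).image fun m => ((m, -ℓ - p * m) : ℤ × ℤ)) := by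
    rw [Finset.disjoint_left]
    rintro ⟨m, n⟩ hA hB
    simp only [Finset.mem_image, Finset.mem_Icc, Prod.mk.injEq] at hA hB
    obtain ⟨a, ha, rfl, rfl⟩ := hA
    obtain ⟨b, hb, rfl, hb2⟩ := hB
    have hz : (p + 1) * (b + c) = 0 := by linarith
    have hb3 : b + c = 0 := by
      rcases mul_eq_zero.1 hz with h | h
      · omega
      · exact h
    omega
  have d45 : Disjoint
      ((Finset.Icc 0 (ℓ - 1)).image fun m => ((m, -ℓ - (p - 1) * m) : ℤ × ℤ))
      ((Finset.Icc (1 - c) (-1)).image fun m => ((m, -ℓ - p * m) : ℤ × ℤ)) := by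
    rw [Finset.disjoint_left]
    rintro ⟨m, n⟩ hA hB
    simp only [Finset.mem_image, Finset.mem_Icc, Prod.mk.injEq] at hA hB
    obtain ⟨a, ha, rfl, rfl⟩ := hA
    obtain ⟨b, hb, rfl, hb2⟩ := hB
    omega
  rw [Fk3, Finset.card_union_of_disjoint (by
      rw [Finset.disjoint_union_left, Finset.disjoint_union_left,
        Finset.disjoint_union_left]
      exact ⟨⟨⟨d15, d25⟩, d35⟩, d45⟩),
    Finset.card_union_of_disjoint (by
      rw [Finset.disjoint_union_left, Finset.disjoint_union_left]
      exact ⟨⟨d14, d24⟩, d34⟩),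
    Finset.card_union_of_disjoint (by
      rw [Finset.disjoint_union_left]; exact ⟨d13, d23⟩),
    Finset.card_union_of_disjoint d12,
    Finset.card_image_of_injective _ inj1, Finset.card_image_of_injective _ inj2,
    Finset.card_image_of_injective _ inj3, Finset.card_image_of_injective _ inj4,
    Finset.card_image_of_injective _ inj5]
  have e1 : (((Finset.Icc (-(p * ℓ)) ℓ).card : ℕ) : ℤ) =
      ℓ + 1 - (-(p * ℓ)) := Int.card_Icc_of_le _ _ (by nlinarith)
  have e2 : (((Finset.Icc (0:ℤ) (ℓ - 1)).card : ℕ) : ℤ) = ℓ - 1 + 1 - 0 :=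
    Int.card_Icc_of_le _ _ (by linarith)
  have e3 : (((Finset.Icc (-c) (-1:ℤ)).card : ℕ) : ℤ) = -1 + 1 - (-c) :=
    Int.card_Icc_of_le _ _ (by linarith)
  have e4 : (((Finset.Icc (1 - c) (-1:ℤ)).card : ℕ) : ℤ) = -1 + 1 - (1 - c) :=
    Int.card_Icc_of_le _ _ (by linarith)
  push_cast
  rw [e1, e2, e3, e4]
  ring

lemma latt3 (p c ℓ : ℤ) (hp : 1 ≤ p) (hc : 1 ≤ c) (hl : 1 ≤ ℓ)
    (h2 : 2 * ℓ = c * (p + 1)) :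
    frontier ((ℓ : ℝ) • polar2 (Qpoly3 p)) ∩ latticePts = emb '' ↑(Fk3 p c ℓ) := by
  have hL : (0 : ℝ) < (ℓ : ℝ) := by exact_mod_cast hl
  rw [frontier3 p _ hL]
  ext x
  constructor
  · rintro ⟨hfr, hlat⟩
    obtain ⟨m, n, rfl⟩ := hlat
    simp only [Set.mem_setOf_eq] at hfr
    refine ⟨(m, n), ?_, rfl⟩
    rw [Finset.mem_coe, mem_Fk3]
    apply (mem_iff3 p c ℓ m n hp hc hl h2).mp
    obtain ⟨⟨h1, h2', h2b, h3, h4⟩, heq⟩ := hfr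
    refine ⟨⟨by exact_mod_cast h1, by exact_mod_cast h2', by exact_mod_cast h2b,
      by exact_mod_cast h3, by exact_mod_cast h4⟩, ?_⟩
    rcases heq with h | h | h | h | h
    · exact Or.inl (by exact_mod_cast h)
    · exact Or.inr (Or.inl (by exact_mod_cast h))
    · exact Or.inr (Or.inr (Or.inl (by exact_mod_cast h)))
    · exact Or.inr (Or.inr (Or.inr (Or.inl (by exact_mod_cast h))))
    · exact Or.inr (Or.inr (Or.inr (Or.inr (by exact_mod_cast h))))
  · rintro ⟨⟨m, n⟩, hmem, rfl⟩
    rw [Finset.mem_coe, mem_Fk3] at hmem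
    obtain ⟨⟨h1, h2', h2b, h3, h4⟩, heq⟩ := (mem_iff3 p c ℓ m n hp hc hl h2).mpr hmem
    refine ⟨?_, m, n, rfl⟩
    simp only [Set.mem_setOf_eq, emb]
    refine ⟨⟨by exact_mod_cast h1, by exact_mod_cast h2', by exact_mod_cast h2b,
      by exact_mod_cast h3, by exact_mod_cast h4⟩, ?_⟩
    rcases heq with h | h | h | h | h
    · exact Or.inl (by exact_mod_cast h)
    · exact Or.inr (Or.inl (by exact_mod_cast h))
    · exact Or.inr (Or.inr (Or.inl (by exact_mod_cast h)))
    · exact Or.inr (Or.inr (Or.inr (Or.inl (by exact_mod_cast h))))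
    · exact Or.inr (Or.inr (Or.inr (Or.inr (by exact_mod_cast h))))


lemma count1 (p c : ℤ) (hp : 1 ≤ p) (hc : 1 ≤ c) (h2 : 2 * ellp p = c * (p + 1)) :
    ((frontier ((ellp p : ℝ) • polar2 (Qpoly1 p)) ∩ latticePts).ncard : ℤ) =
      ellp p * (p + 5) + 2 * c := by
  have hl : 1 ≤ ellp p := by nlinarith
  rw [latt1 p c (ellp p) hp hc hl h2, Set.ncard_image_of_injective _ emb_inj,
    Set.ncard_coe_finset]
  exact card_Fk1 p c (ellp p) hp hc hl h2

lemma count2 (p c : ℤ) (hp : 1 ≤ p) (hc : 1 ≤ c) (h2 : 2 * ellp p = c * (p + 1)) :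
    ((frontier ((ellp p : ℝ) • polar2 (Qpoly2 p)) ∩ latticePts).ncard : ℤ) =
      ellp p * (p + 4) + 2 * c := by
  have hl : 1 ≤ ellp p := by nlinarith
  rw [latt2 p c (ellp p) hp hc hl h2, Set.ncard_image_of_injective _ emb_inj,
    Set.ncard_coe_finset]
  exact card_Fk2 p c (ellp p) hp hc hl h2

lemma count3 (p c : ℤ) (hp : 1 ≤ p) (hc : 1 ≤ c) (h2 : 2 * ellp p = c * (p + 1)) :
    ((frontier ((ellp p : ℝ) • polar2 (Qpoly3 p)) ∩ latticePts).ncard : ℤ) =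
      ellp p * (p + 3) + 2 * c := by
  have hl : 1 ≤ ellp p := by nlinarith
  rw [latt3 p c (ellp p) hp hc hl h2, Set.ncard_image_of_injective _ emb_inj,
    Set.ncard_coe_finset]
  exact card_Fk3 p c (ellp p) hp hc hl h2

lemma ncard_cast_eq (S : Set (ℝ × ℝ)) (v : ℤ) (h : (S.ncard : ℤ) = v) :
    (S.ncard : ℚ) = (v : ℚ) := by exact_mod_cast congrArg (Int.cast : ℤ → ℚ) h

lemma h2_odd (p : ℤ) (hodd : Odd p) : 2 * ellp p = 1 * (p + 1) := by
  rw [ellp, if_pos hodd]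
  have := Int.odd_iff.mp hodd
  omega

lemma h2_even (p : ℤ) (heven : Even p) : 2 * ellp p = 2 * (p + 1) := by
  rw [ellp, if_neg (Int.not_odd_iff_even.mpr heven)]

/-- the number of lattice points on ∂(ℓ_p·Q̊_p^[k]). -/
theorem stmt11 (p : ℤ) (hp : 1 ≤ p) (k : ℕ) (hk : k ∈ ({1, 2, 3} : Set ℕ)) :
    (Odd p →
      ((frontier ((ellp p : ℝ) • polar2 (Qpoly p k)) ∩ latticePts).ncard : ℚ) =
        (if k = 1 then ((p : ℚ) + 3) ^ 2
         else if k = 2 then (p : ℚ) ^ 2 + 5 * p + 8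
         else (p : ℚ) ^ 2 + 4 * p + 7) / 2) ∧
    (Even p →
      ((frontier ((ellp p : ℝ) • polar2 (Qpoly p k)) ∩ latticePts).ncard : ℚ) =
        (if k = 1 then ((p : ℚ) + 3) ^ 2
         else if k = 2 then (p : ℚ) ^ 2 + 5 * p + 8
         else (p : ℚ) ^ 2 + 4 * p + 7)) := by
  have hk' : k = 1 ∨ k = 2 ∨ k = 3 := by simpa using hk
  rcases hk' with rfl | rfl | rfl
  · rw [show Qpoly p 1 = Qpoly1 p from by simp [Qpoly]]
    norm_num only
    constructor
    · intro hodd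
      have h2 := h2_odd p hodd
      have h2q : (2 : ℚ) * (ellp p : ℚ) = 1 * ((p : ℚ) + 1) := by exact_mod_cast h2
      rw [ncard_cast_eq _ _ (count1 p 1 hp le_rfl h2)]
      push_cast
      linear_combination (((p : ℚ) + 5) / 2) * h2q
    · intro heven
      have h2 := h2_even p heven
      have h2q : (2 : ℚ) * (ellp p : ℚ) = 2 * ((p : ℚ) + 1) := by exact_mod_cast h2
      rw [ncard_cast_eq _ _ (count1 p 2 hp (by norm_num) h2)]
      push_cast
      linear_combination (((p : ℚ) + 5) / 2) * h2q
  · rw [show Qpoly p 2 = Qpoly2 p from by simp [Qpoly]]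
    norm_num only
    constructor
    · intro hodd
      have h2 := h2_odd p hodd
      have h2q : (2 : ℚ) * (ellp p : ℚ) = 1 * ((p : ℚ) + 1) := by exact_mod_cast h2
      rw [ncard_cast_eq _ _ (count2 p 1 hp le_rfl h2)]
      push_cast
      linear_combination (((p : ℚ) + 4) / 2) * h2q
    · intro heven
      have h2 := h2_even p heven
      have h2q : (2 : ℚ) * (ellp p : ℚ) = 2 * ((p : ℚ) + 1) := by exact_mod_cast h2
      rw [ncard_cast_eq _ _ (count2 p 2 hp (by norm_num) h2)]
      push_cast
      linear_combination (((p : ℚ) + 4) / 2) * h2q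
  · rw [show Qpoly p 3 = Qpoly3 p from by simp [Qpoly]]
    norm_num only
    constructor
    · intro hodd
      have h2 := h2_odd p hodd
      have h2q : (2 : ℚ) * (ellp p : ℚ) = 1 * ((p : ℚ) + 1) := by exact_mod_cast h2
      rw [ncard_cast_eq _ _ (count3 p 1 hp le_rfl h2)]
      push_cast
      linear_combination (((p : ℚ) + 3) / 2) * h2q
    · intro heven
      have h2 := h2_even p heven
      have h2q : (2 : ℚ) * (ellp p : ℚ) = 2 * ((p : ℚ) + 1) := by exact_mod_cast h2
      rw [ncard_cast_eq _ _ (count3 p 2 hp (by norm_num) h2)]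
      push_cast
      linear_combination (((p : ℚ) + 3) / 2) * h2q
end

section
/- For every integer p ≥ 1 and k ∈ {1,2,3}, the total number of lattice points of ℤ² contained in ℓ_p·Q̊_p^[k] equals 1 + δ, where δ is: for k = 1, (p+3)³/8 if p is odd and (p+2)(p+3)²/2 if p is even; for k = 2, (p+3)(p²+5p+8)/8 if p is odd and (p+2)(p²+5p+8)/2 if p is even; for k = 3, (p+3)(p²+4p+7)/8 if p is odd and (p+2)(p²+4p+7)/2 if p is even. -/
open Pointwise

lemma polar2_convexHull' (V : Set (ℝ × ℝ)) : polar2 (convexHull ℝ V) = polar2 V := by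
  ext y
  constructor
  · intro h x hx; exact h x (subset_convexHull ℝ V hx)
  · intro h x hx
    have hlin : IsLinearMap ℝ (fun x : ℝ × ℝ => y.1 * x.1 + y.2 * x.2) := by
      constructor
      · intro a b; simp [Prod.fst_add, Prod.snd_add]; ring
      · intro c a; simp [Prod.smul_fst, Prod.smul_snd, smul_eq_mul]; ring
    exact convexHull_min h (convex_halfSpace_ge hlin (-1)) hx

lemma mem_scaled_polar' (c : ℝ) (hc : 0 < c) (V : Set (ℝ × ℝ)) (y : ℝ × ℝ) :
    y ∈ c • polar2 (convexHull ℝ V) ↔ ∀ x ∈ V, -c ≤ y.1 * x.1 + y.2 * x.2 := by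
  rw [Set.mem_smul_set_iff_inv_smul_mem₀ (ne_of_gt hc), polar2_convexHull']
  unfold polar2
  simp only [Set.mem_setOf_eq, Prod.smul_fst, Prod.smul_snd, smul_eq_mul]
  constructor
  · intro h x hx
    have := h x hx
    have h2 : c⁻¹ * y.1 * x.1 + c⁻¹ * y.2 * x.2 = (y.1 * x.1 + y.2 * x.2) / c := by
      field_simp
    rw [h2, le_div_iff₀ hc] at this
    linarith
  · intro h x hx
    have := h x hx
    have h2 : c⁻¹ * y.1 * x.1 + c⁻¹ * y.2 * x.2 = (y.1 * x.1 + y.2 * x.2) / c := by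
      field_simp
    rw [h2, le_div_iff₀ hc]
    linarith

noncomputable def grid (a b : ℤ) (lo hi : ℤ → ℤ) : Finset (ℤ × ℤ) :=
  (Finset.Icc a b).biUnion (fun m =>
    (Finset.Icc (lo m) (hi m)).map ⟨fun n => (m, n), fun _ _ h => (Prod.mk.injEq _ _ _ _ ▸ h).2⟩)

lemma mem_grid {a b : ℤ} {lo hi : ℤ → ℤ} {q : ℤ × ℤ} :
    q ∈ grid a b lo hi ↔ a ≤ q.1 ∧ q.1 ≤ b ∧ lo q.1 ≤ q.2 ∧ q.2 ≤ hi q.1 := by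
  unfold grid
  simp only [Finset.mem_biUnion, Finset.mem_Icc, Finset.mem_map, Function.Embedding.coeFn_mk]
  constructor
  · rintro ⟨m, ⟨h1, h2⟩, n, ⟨h3, h4⟩, rfl⟩; exact ⟨h1, h2, h3, h4⟩
  · rintro ⟨h1, h2, h3, h4⟩; exact ⟨q.1, ⟨h1, h2⟩, q.2, ⟨h3, h4⟩, rfl⟩

lemma card_grid (a b : ℤ) (lo hi : ℤ → ℤ) (h : ∀ m ∈ Finset.Icc a b, lo m ≤ hi m) :
    ((grid a b lo hi).card : ℚ) = ∑ m ∈ Finset.Icc a b, ((hi m : ℚ) - lo m + 1) := by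
  unfold grid
  rw [Finset.card_biUnion]
  · rw [Nat.cast_sum]
    apply Finset.sum_congr rfl
    intro m hm
    rw [Finset.card_map, Int.card_Icc]
    have := h m hm
    have h2 : (0:ℤ) ≤ hi m + 1 - lo m := by omega
    rw [show (((hi m + 1 - lo m).toNat : ℕ) : ℚ) = (((hi m + 1 - lo m).toNat : ℤ) : ℚ) by push_cast; ring,
      Int.toNat_of_nonneg h2]
    push_cast; ring
  · intro x hx y hy hxy
    simp only [Finset.disjoint_left, Finset.mem_map, Function.Embedding.coeFn_mk]
    rintro ⟨m, n⟩ ⟨n1, _, h1⟩ ⟨n2, _, h2⟩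
    exact hxy ((Prod.mk.injEq _ _ _ _ ▸ h1).1.symm ▸ (Prod.mk.injEq _ _ _ _ ▸ h2).1 ▸ rfl)

lemma sum_Icc_linear (a b : ℤ) (hab : a ≤ b) (c d : ℚ) :
    ∑ m ∈ Finset.Icc a b, (c * m + d) = c * ((a + b) * (b + 1 - a)) / 2 + d * (b + 1 - a) := by
  obtain ⟨n, rfl⟩ : ∃ n : ℕ, b = a + n := ⟨(b - a).toNat, by omega⟩
  clear hab
  induction n with
  | zero => simp only [Nat.cast_zero, add_zero, Finset.Icc_self, Finset.sum_singleton]; push_cast; ring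
  | succ n ih =>
    have he : a + ((n + 1 : ℕ) : ℤ) = (a + n) + 1 := by push_cast; ring
    have hins : Finset.Icc a (a + (n:ℤ) + 1) = insert (a + (n:ℤ) + 1) (Finset.Icc a (a + (n:ℤ))) := by
      ext x; simp only [Finset.mem_Icc, Finset.mem_insert]; omega
    rw [he, hins, Finset.sum_insert (by simp only [Finset.mem_Icc]; omega), ih]
    push_cast; ring

lemma ncard_scaled_polar (c : ℝ) (hc : 0 < c) (V : Set (ℝ × ℝ)) (T : Finset (ℤ × ℤ))
    (h : ∀ m n : ℤ, (∀ x ∈ V, -c ≤ (m : ℝ) * x.1 + (n : ℝ) * x.2) ↔ (m, n) ∈ T) :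
    ((c • polar2 (convexHull ℝ V)) ∩ latticePts).ncard = T.card := by
  have hset : (c • polar2 (convexHull ℝ V)) ∩ latticePts
      = (fun q : ℤ × ℤ => ((q.1 : ℝ), (q.2 : ℝ))) '' (T : Set (ℤ × ℤ)) := by
    ext y
    simp only [Set.mem_inter_iff, mem_scaled_polar' c hc, latticePts, Set.mem_setOf_eq,
      Set.mem_image, Finset.mem_coe]
    constructor
    · rintro ⟨hpol, m, n, rfl⟩
      exact ⟨(m, n), (h m n).mp hpol, rfl⟩
    · rintro ⟨⟨m, n⟩, hq, rfl⟩
      exact ⟨(h m n).mpr hq, m, n, rfl⟩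
  rw [hset, Set.ncard_image_of_injective _ ?_, Set.ncard_coe_finset]
  intro a b hab
  have h1 : (a.1 : ℝ) = b.1 := congrArg Prod.fst hab
  have h2 : (a.2 : ℝ) = b.2 := congrArg Prod.snd hab
  exact Prod.ext (by exact_mod_cast h1) (by exact_mod_cast h2)

lemma mem1 (p l mlo : ℤ) (hp : 1 ≤ p) (hl : 1 ≤ l)
    (hB : (p+1)*(mlo-1) + 2*l < 0) (m n : ℤ) :
    (∀ x ∈ ({(1, -1), ((p : ℝ), 1), (-1, 0)} : Set (ℝ × ℝ)),
        -((l:ℤ):ℝ) ≤ (m : ℝ) * x.1 + (n : ℝ) * x.2)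
      ↔ (m, n) ∈ grid mlo l (fun m => -l - p*m) (fun m => m + l) := by
  rw [mem_grid]
  simp only [Set.mem_insert_iff, Set.mem_singleton_iff, forall_eq_or_imp, forall_eq]
  constructor
  · rintro ⟨h1, h2, h3⟩
    norm_num at h1 h2 h3
    have i1 : (-l : ℤ) ≤ m - n := by exact_mod_cast (show (((-l : ℤ)):ℝ) ≤ ((m - n : ℤ):ℝ) by push_cast; linarith)
    have i2 : (-l : ℤ) ≤ m * p + n := by exact_mod_cast (show (((-l : ℤ)):ℝ) ≤ ((m * p + n : ℤ):ℝ) by push_cast; linarith)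
    have i3 : (-l : ℤ) ≤ -m := by omega
    refine ⟨?_, by omega, by nlinarith, by omega⟩
    · by_contra hcon
      push_neg at hcon
      have : m ≤ mlo - 1 := by omega
      have h4 : (p+1) * m ≤ (p+1) * (mlo - 1) := by
        apply mul_le_mul_of_nonneg_left this (by omega)
      nlinarith
  · rintro ⟨h1, h2, h3, h4⟩
    have c2 : ((-l - p*m : ℤ) : ℝ) ≤ ((n : ℤ) : ℝ) := by exact_mod_cast h3
    have c3 : ((n : ℤ) : ℝ) ≤ ((m + l : ℤ) : ℝ) := by exact_mod_cast h4
    have c4 : ((m : ℤ) : ℝ) ≤ ((l : ℤ) : ℝ) := by exact_mod_cast h2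
    push_cast at c2 c3 c4
    refine ⟨by norm_num; linarith, by norm_num; linarith, by norm_num; linarith⟩

lemma count1_s13 (p l mlo : ℤ) (hp : 1 ≤ p) (hl : 1 ≤ l) (hm0 : mlo ≤ 0)
    (hA : 0 ≤ (p+1)*mlo + 2*l) :
    (((grid mlo l (fun m => -l - p*m) (fun m => m + l)).card : ℕ) : ℚ)
      = (p+1) * (((mlo:ℚ) + l) * (l + 1 - mlo)) / 2 + (2*l+1) * (l + 1 - mlo) := by
  rw [card_grid]
  · rw [show (∑ m ∈ Finset.Icc mlo l, (((m + l : ℤ):ℚ) - ((-l - p*m : ℤ):ℚ) + 1))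
        = ∑ m ∈ Finset.Icc mlo l, (((p:ℚ)+1) * (m:ℚ) + (2*(l:ℚ)+1)) from
      Finset.sum_congr rfl (fun m _ => by push_cast; ring)]
    rw [sum_Icc_linear mlo l (by omega) _ _]
  · intro m hm
    rw [Finset.mem_Icc] at hm
    have h4 : (p+1) * mlo ≤ (p+1) * m := mul_le_mul_of_nonneg_left hm.1 (by omega)
    nlinarith

lemma mem2 (p l mlo : ℤ) (hp : 1 ≤ p) (hl : 1 ≤ l)
    (hB : (p+1)*(mlo-1) + 2*l < 0) (m n : ℤ) :
    (∀ x ∈ ({(1, -1), ((p : ℝ), 1), ((p : ℝ) - 1, 1), (-1, 0)} : Set (ℝ × ℝ)),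
        -((l:ℤ):ℝ) ≤ (m : ℝ) * x.1 + (n : ℝ) * x.2)
      ↔ (m, n) ∈ grid mlo l (fun m => max (-l - p*m) (-l - (p-1)*m)) (fun m => m + l) := by
  rw [mem_grid]
  simp only [Set.mem_insert_iff, Set.mem_singleton_iff, forall_eq_or_imp, forall_eq]
  constructor
  · rintro ⟨h1, h2, h3, h4⟩
    have g1 : -((l:ℤ):ℝ) ≤ (m:ℝ) * 1 + (n:ℝ) * (-1) := h1
    have g2 : -((l:ℤ):ℝ) ≤ (m:ℝ) * (p:ℝ) + (n:ℝ) * 1 := h2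
    have g3 : -((l:ℤ):ℝ) ≤ (m:ℝ) * ((p:ℝ) - 1) + (n:ℝ) * 1 := h3
    have g4 : -((l:ℤ):ℝ) ≤ (m:ℝ) * (-1) + (n:ℝ) * 0 := h4
    have i1 : (-l : ℤ) ≤ m - n := by exact_mod_cast (show (((-l : ℤ)):ℝ) ≤ ((m - n : ℤ):ℝ) by push_cast; linarith)
    have i2 : (-l : ℤ) ≤ m * p + n := by exact_mod_cast (show (((-l : ℤ)):ℝ) ≤ ((m * p + n : ℤ):ℝ) by push_cast; linarith)
    have i3 : (-l : ℤ) ≤ m * (p-1) + n := by exact_mod_cast (show (((-l : ℤ)):ℝ) ≤ ((m * (p-1) + n : ℤ):ℝ) by push_cast; linarith)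
    have i4 : (-l : ℤ) ≤ -m := by exact_mod_cast (show (((-l : ℤ)):ℝ) ≤ ((-m : ℤ):ℝ) by push_cast; linarith)
    refine ⟨?_, by omega, max_le (by linarith) (by linarith), by omega⟩
    · by_contra hcon
      push_neg at hcon
      have hle : m ≤ mlo - 1 := by omega
      have h5 : (p+1) * m ≤ (p+1) * (mlo - 1) := mul_le_mul_of_nonneg_left hle (by omega)
      nlinarith
  · rintro ⟨h1, h2, h3, h4⟩
    rw [max_le_iff] at h3
    have c2 : ((-l - p*m : ℤ) : ℝ) ≤ ((n : ℤ) : ℝ) := by exact_mod_cast h3.1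
    have c2' : ((-l - (p-1)*m : ℤ) : ℝ) ≤ ((n : ℤ) : ℝ) := by exact_mod_cast h3.2
    have c3 : ((n : ℤ) : ℝ) ≤ ((m + l : ℤ) : ℝ) := by exact_mod_cast h4
    have c4 : ((m : ℤ) : ℝ) ≤ ((l : ℤ) : ℝ) := by exact_mod_cast h2
    push_cast at c2 c2' c3 c4
    refine ⟨show -((l:ℤ):ℝ) ≤ (m:ℝ) * 1 + (n:ℝ) * (-1) by push_cast; linarith,
            show -((l:ℤ):ℝ) ≤ (m:ℝ) * (p:ℝ) + (n:ℝ) * 1 by push_cast; linarith,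
            show -((l:ℤ):ℝ) ≤ (m:ℝ) * ((p:ℝ) - 1) + (n:ℝ) * 1 by push_cast; linarith,
            show -((l:ℤ):ℝ) ≤ (m:ℝ) * (-1) + (n:ℝ) * 0 by push_cast; linarith⟩

lemma count2_s13 (p l mlo : ℤ) (hp : 1 ≤ p) (hl : 1 ≤ l) (hm1 : mlo ≤ -1)
    (hA : 0 ≤ (p+1)*mlo + 2*l) (hC : 0 ≤ p*mlo + 2*l) :
    (((grid mlo l (fun m => max (-l - p*m) (-l - (p-1)*m)) (fun m => m + l)).card : ℕ) : ℚ)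
      = ((p:ℚ)+1) * (((mlo:ℚ) + (-1)) * (-1 + 1 - mlo)) / 2 + (2*l+1) * (-1 + 1 - mlo)
        + ((p:ℚ) * ((0 + (l:ℚ)) * (l + 1 - 0)) / 2 + (2*l+1) * (l + 1 - 0)) := by
  rw [card_grid]
  · have hsplit : Finset.Icc mlo l = Finset.Icc mlo (-1) ∪ Finset.Icc 0 l := by
      ext x; simp only [Finset.mem_Icc, Finset.mem_union]; omega
    rw [hsplit, Finset.sum_union (by
      simp only [Finset.disjoint_left, Finset.mem_Icc]; rintro a ⟨_, h⟩ ⟨h', _⟩; omega)]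
    have e1 : ∑ m ∈ Finset.Icc mlo (-1), (((m + l : ℤ):ℚ) - ((max (-l - p*m) (-l - (p-1)*m) : ℤ):ℚ) + 1)
        = ∑ m ∈ Finset.Icc mlo (-1), (((p:ℚ)+1) * (m:ℚ) + (2*(l:ℚ)+1)) := by
      apply Finset.sum_congr rfl
      intro m hm
      rw [Finset.mem_Icc] at hm
      rw [max_eq_left (by nlinarith [hm.2] : -l - (p-1)*m ≤ -l - p*m)]
      push_cast; ring
    have e2 : ∑ m ∈ Finset.Icc 0 l, (((m + l : ℤ):ℚ) - ((max (-l - p*m) (-l - (p-1)*m) : ℤ):ℚ) + 1)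
        = ∑ m ∈ Finset.Icc 0 l, ((p:ℚ) * (m:ℚ) + (2*(l:ℚ)+1)) := by
      apply Finset.sum_congr rfl
      intro m hm
      rw [Finset.mem_Icc] at hm
      rw [max_eq_right (by nlinarith [hm.1] : -l - p*m ≤ -l - (p-1)*m)]
      push_cast; ring
    rw [e1, e2, sum_Icc_linear mlo (-1) (by omega) _ _, sum_Icc_linear 0 l (by omega) _ _]
    push_cast; ring
  · intro m hm
    rw [Finset.mem_Icc] at hm
    have h4 : (p+1) * mlo ≤ (p+1) * m := mul_le_mul_of_nonneg_left hm.1 (by omega)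
    have h5 : p * mlo ≤ p * m := mul_le_mul_of_nonneg_left hm.1 (by omega)
    apply max_le <;> nlinarith

lemma mem3 (p l mlo : ℤ) (hp : 1 ≤ p) (hl : 1 ≤ l)
    (hB : (p+1)*(mlo-1) + 2*l < 0) (m n : ℤ) :
    (∀ x ∈ ({(1, -1), ((p : ℝ), 1), ((p : ℝ) - 1, 1), (-1, 0), (0, -1)} : Set (ℝ × ℝ)),
        -((l:ℤ):ℝ) ≤ (m : ℝ) * x.1 + (n : ℝ) * x.2)
      ↔ (m, n) ∈ grid mlo l (fun m => max (-l - p*m) (-l - (p-1)*m)) (fun m => min (m + l) l) := by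
  rw [mem_grid]
  simp only [Set.mem_insert_iff, Set.mem_singleton_iff, forall_eq_or_imp, forall_eq]
  constructor
  · rintro ⟨h1, h2, h3, h4, h5⟩
    have g1 : -((l:ℤ):ℝ) ≤ (m:ℝ) * 1 + (n:ℝ) * (-1) := h1
    have g2 : -((l:ℤ):ℝ) ≤ (m:ℝ) * (p:ℝ) + (n:ℝ) * 1 := h2
    have g3 : -((l:ℤ):ℝ) ≤ (m:ℝ) * ((p:ℝ) - 1) + (n:ℝ) * 1 := h3
    have g4 : -((l:ℤ):ℝ) ≤ (m:ℝ) * (-1) + (n:ℝ) * 0 := h4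
    have g5 : -((l:ℤ):ℝ) ≤ (m:ℝ) * 0 + (n:ℝ) * (-1) := h5
    have i1 : (-l : ℤ) ≤ m - n := by exact_mod_cast (show (((-l : ℤ)):ℝ) ≤ ((m - n : ℤ):ℝ) by push_cast; linarith)
    have i2 : (-l : ℤ) ≤ m * p + n := by exact_mod_cast (show (((-l : ℤ)):ℝ) ≤ ((m * p + n : ℤ):ℝ) by push_cast; linarith)
    have i3 : (-l : ℤ) ≤ m * (p-1) + n := by exact_mod_cast (show (((-l : ℤ)):ℝ) ≤ ((m * (p-1) + n : ℤ):ℝ) by push_cast; linarith)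
    have i4 : (-l : ℤ) ≤ -m := by exact_mod_cast (show (((-l : ℤ)):ℝ) ≤ ((-m : ℤ):ℝ) by push_cast; linarith)
    have i5 : (-l : ℤ) ≤ -n := by exact_mod_cast (show (((-l : ℤ)):ℝ) ≤ ((-n : ℤ):ℝ) by push_cast; linarith)
    refine ⟨?_, by omega, max_le (by linarith) (by linarith), le_min (by omega) (by omega)⟩
    · by_contra hcon
      push_neg at hcon
      have hle : m ≤ mlo - 1 := by omega
      have h6 : (p+1) * m ≤ (p+1) * (mlo - 1) := mul_le_mul_of_nonneg_left hle (by omega)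
      nlinarith
  · rintro ⟨h1, h2, h3, h4⟩
    rw [max_le_iff] at h3
    rw [le_min_iff] at h4
    have c2 : ((-l - p*m : ℤ) : ℝ) ≤ ((n : ℤ) : ℝ) := by exact_mod_cast h3.1
    have c2' : ((-l - (p-1)*m : ℤ) : ℝ) ≤ ((n : ℤ) : ℝ) := by exact_mod_cast h3.2
    have c3 : ((n : ℤ) : ℝ) ≤ ((m + l : ℤ) : ℝ) := by exact_mod_cast h4.1
    have c3' : ((n : ℤ) : ℝ) ≤ ((l : ℤ) : ℝ) := by exact_mod_cast h4.2
    have c4 : ((m : ℤ) : ℝ) ≤ ((l : ℤ) : ℝ) := by exact_mod_cast h2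
    push_cast at c2 c2' c3 c3' c4
    refine ⟨show -((l:ℤ):ℝ) ≤ (m:ℝ) * 1 + (n:ℝ) * (-1) by push_cast; linarith,
            show -((l:ℤ):ℝ) ≤ (m:ℝ) * (p:ℝ) + (n:ℝ) * 1 by push_cast; linarith,
            show -((l:ℤ):ℝ) ≤ (m:ℝ) * ((p:ℝ) - 1) + (n:ℝ) * 1 by push_cast; linarith,
            show -((l:ℤ):ℝ) ≤ (m:ℝ) * (-1) + (n:ℝ) * 0 by push_cast; linarith,
            show -((l:ℤ):ℝ) ≤ (m:ℝ) * 0 + (n:ℝ) * (-1) by push_cast; linarith⟩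

lemma count3_s13 (p l mlo : ℤ) (hp : 1 ≤ p) (hl : 1 ≤ l) (hm1 : mlo ≤ -1)
    (hA : 0 ≤ (p+1)*mlo + 2*l) (hC : 0 ≤ p*mlo + 2*l) :
    (((grid mlo l (fun m => max (-l - p*m) (-l - (p-1)*m)) (fun m => min (m + l) l)).card : ℕ) : ℚ)
      = ((p:ℚ)+1) * (((mlo:ℚ) + (-1)) * (-1 + 1 - mlo)) / 2 + (2*l+1) * (-1 + 1 - mlo)
        + (((p:ℚ)-1) * ((0 + (l:ℚ)) * (l + 1 - 0)) / 2 + (2*l+1) * (l + 1 - 0)) := by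
  rw [card_grid]
  · have hsplit : Finset.Icc mlo l = Finset.Icc mlo (-1) ∪ Finset.Icc 0 l := by
      ext x; simp only [Finset.mem_Icc, Finset.mem_union]; omega
    rw [hsplit, Finset.sum_union (by
      simp only [Finset.disjoint_left, Finset.mem_Icc]; rintro a ⟨_, h⟩ ⟨h', _⟩; omega)]
    have e1 : ∑ m ∈ Finset.Icc mlo (-1), (((min (m + l) l : ℤ):ℚ) - ((max (-l - p*m) (-l - (p-1)*m) : ℤ):ℚ) + 1)
        = ∑ m ∈ Finset.Icc mlo (-1), (((p:ℚ)+1) * (m:ℚ) + (2*(l:ℚ)+1)) := by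
      apply Finset.sum_congr rfl
      intro m hm
      rw [Finset.mem_Icc] at hm
      rw [max_eq_left (by nlinarith [hm.2] : -l - (p-1)*m ≤ -l - p*m),
        min_eq_left (by omega : m + l ≤ l)]
      push_cast; ring
    have e2 : ∑ m ∈ Finset.Icc 0 l, (((min (m + l) l : ℤ):ℚ) - ((max (-l - p*m) (-l - (p-1)*m) : ℤ):ℚ) + 1)
        = ∑ m ∈ Finset.Icc 0 l, (((p:ℚ)-1) * (m:ℚ) + (2*(l:ℚ)+1)) := by
      apply Finset.sum_congr rfl
      intro m hm
      rw [Finset.mem_Icc] at hm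
      rw [max_eq_right (by nlinarith [hm.1] : -l - p*m ≤ -l - (p-1)*m),
        min_eq_right (by omega : l ≤ m + l)]
      push_cast; ring
    rw [e1, e2, sum_Icc_linear mlo (-1) (by omega) _ _, sum_Icc_linear 0 l (by omega) _ _]
    push_cast; ring
  · intro m hm
    rw [Finset.mem_Icc] at hm
    have h4 : (p+1) * mlo ≤ (p+1) * m := mul_le_mul_of_nonneg_left hm.1 (by omega)
    have h5 : p * mlo ≤ p * m := mul_le_mul_of_nonneg_left hm.1 (by omega)
    apply max_le <;> apply le_min <;> nlinarith

lemma ellp_odd (p : ℤ) (h : Odd p) : 2 * ellp p = p + 1 := by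
  unfold ellp; rw [if_pos h]; obtain ⟨t, rfl⟩ := h; omega

lemma ellp_even (p : ℤ) (h : Even p) : ellp p = p + 1 := by
  unfold ellp; rw [if_neg (by simpa using (Int.not_odd_iff_even.mpr h))]

lemma ellp_ge (p : ℤ) (hp : 1 ≤ p) : 1 ≤ ellp p := by
  unfold ellp; split_ifs with h
  · obtain ⟨t, rfl⟩ := h; omega
  · omega

/-- the total number of lattice points in ℓ_p·Q̊_p^[k] equals 1 + δ_{Q_p^[k]}. -/
theorem stmt13 (p : ℤ) (hp : 1 ≤ p) (k : ℕ) (hk : k ∈ ({1, 2, 3} : Set ℕ)) :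
    (Odd p →
      ((((ellp p : ℝ) • polar2 (Qpoly p k)) ∩ latticePts).ncard : ℚ) =
        1 + ((p : ℚ) + 3) *
          (if k = 1 then ((p : ℚ) + 3) ^ 2
           else if k = 2 then (p : ℚ) ^ 2 + 5 * p + 8
           else (p : ℚ) ^ 2 + 4 * p + 7) / 8) ∧
    (Even p →
      ((((ellp p : ℝ) • polar2 (Qpoly p k)) ∩ latticePts).ncard : ℚ) =
        1 + ((p : ℚ) + 2) *
          (if k = 1 then ((p : ℚ) + 3) ^ 2
           else if k = 2 then (p : ℚ) ^ 2 + 5 * p + 8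
           else (p : ℚ) ^ 2 + 4 * p + 7) / 2) := by
  have hl1 := ellp_ge p hp
  have hcpos : (0:ℝ) < ((ellp p : ℤ):ℝ) := by exact_mod_cast (by omega : (0:ℤ) < ellp p)
  simp only [Set.mem_insert_iff, Set.mem_singleton_iff] at hk
  rcases hk with rfl | rfl | rfl
  · constructor
    · intro hodd
      have h2l := ellp_odd p hodd
      have hlq : ((ellp p : ℤ):ℚ) = ((p:ℚ)+1)/2 := by
        have := congrArg (fun z : ℤ => (z:ℚ)) h2l; push_cast at this; linarith
      rw [show Qpoly p 1 = convexHull ℝ ({(1, -1), ((p : ℝ), 1), (-1, 0)} : Set (ℝ × ℝ)) from rfl,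
        ncard_scaled_polar _ hcpos _ _ (fun m n => mem1 p (ellp p) (-1) hp hl1 (by omega) m n),
        count1_s13 p (ellp p) (-1) hp hl1 (by omega) (by omega), hlq]
      norm_num; ring
    · intro heven
      have hle := ellp_even p heven
      have hlq : ((ellp p : ℤ):ℚ) = (p:ℚ)+1 := by rw [hle]; push_cast; ring
      rw [show Qpoly p 1 = convexHull ℝ ({(1, -1), ((p : ℝ), 1), (-1, 0)} : Set (ℝ × ℝ)) from rfl,
        ncard_scaled_polar _ hcpos _ _ (fun m n => mem1 p (ellp p) (-2) hp hl1 (by omega) m n),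
        count1_s13 p (ellp p) (-2) hp hl1 (by omega) (by omega), hlq]
      norm_num; ring
  · constructor
    · intro hodd
      have h2l := ellp_odd p hodd
      have hlq : ((ellp p : ℤ):ℚ) = ((p:ℚ)+1)/2 := by
        have := congrArg (fun z : ℤ => (z:ℚ)) h2l; push_cast at this; linarith
      rw [show Qpoly p 2 = convexHull ℝ ({(1, -1), ((p : ℝ), 1), ((p : ℝ) - 1, 1), (-1, 0)} : Set (ℝ × ℝ)) from rfl,
        ncard_scaled_polar _ hcpos _ _ (fun m n => mem2 p (ellp p) (-1) hp hl1 (by omega) m n),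
        count2_s13 p (ellp p) (-1) hp hl1 (by omega) (by omega) (by omega), hlq]
      norm_num; ring
    · intro heven
      have hle := ellp_even p heven
      have hlq : ((ellp p : ℤ):ℚ) = (p:ℚ)+1 := by rw [hle]; push_cast; ring
      rw [show Qpoly p 2 = convexHull ℝ ({(1, -1), ((p : ℝ), 1), ((p : ℝ) - 1, 1), (-1, 0)} : Set (ℝ × ℝ)) from rfl,
        ncard_scaled_polar _ hcpos _ _ (fun m n => mem2 p (ellp p) (-2) hp hl1 (by omega) m n),
        count2_s13 p (ellp p) (-2) hp hl1 (by omega) (by omega) (by omega), hlq]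
      norm_num; ring
  · constructor
    · intro hodd
      have h2l := ellp_odd p hodd
      have hlq : ((ellp p : ℤ):ℚ) = ((p:ℚ)+1)/2 := by
        have := congrArg (fun z : ℤ => (z:ℚ)) h2l; push_cast at this; linarith
      rw [show Qpoly p 3 = convexHull ℝ ({(1, -1), ((p : ℝ), 1), ((p : ℝ) - 1, 1), (-1, 0), (0, -1)} : Set (ℝ × ℝ)) from rfl,
        ncard_scaled_polar _ hcpos _ _ (fun m n => mem3 p (ellp p) (-1) hp hl1 (by omega) m n),
        count3_s13 p (ellp p) (-1) hp hl1 (by omega) (by omega) (by omega), hlq]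
      norm_num; ring
    · intro heven
      have hle := ellp_even p heven
      have hlq : ((ellp p : ℤ):ℚ) = (p:ℚ)+1 := by rw [hle]; push_cast; ring
      rw [show Qpoly p 3 = convexHull ℝ ({(1, -1), ((p : ℝ), 1), ((p : ℝ) - 1, 1), (-1, 0), (0, -1)} : Set (ℝ × ℝ)) from rfl,
        ncard_scaled_polar _ hcpos _ _ (fun m n => mem3 p (ellp p) (-2) hp hl1 (by omega) m n),
        count3_s13 p (ellp p) (-2) hp hl1 (by omega) (by omega) (by omega), hlq]
      norm_num; ring
end
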